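/- arXiv:1906.10271 — 2 statements merged into one kernel-verified Lean document; each statement's English description precedes it below -/
import Mathlib

section
/- Let V, W be bounded operators on a nonzero Hilbert space H with W* V = I and suppose ker(V*) ≠ {0} and ker(W*) ≠ {0}. Then ker(V*) is not orthogonal to ker(W*): there exist v ∈ ker(V*) and w ∈ ker(W*) with ⟨w, v⟩ ≠ 0. -/
open scoped InnerProductSpace

/-- If `W* V = I` and the kernels of `V*` and `W*` are nontrivial, then
these kernels are not orthogonal to each other. -/
theorem stmt_7 {H : Type*} [NormedAddCommGroup H] [InnerProductSpace ℂ H]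
    [CompleteSpace H] [Nontrivial H] (V W : H →L[ℂ] H)
    (h : (ContinuousLinearMap.adjoint W) * V = 1)
    (hV : LinearMap.ker (ContinuousLinearMap.adjoint V : H →ₗ[ℂ] H) ≠ ⊥)
    (hW : LinearMap.ker (ContinuousLinearMap.adjoint W : H →ₗ[ℂ] H) ≠ ⊥) :
    ∃ v ∈ LinearMap.ker (ContinuousLinearMap.adjoint V : H →ₗ[ℂ] H),
      ∃ w ∈ LinearMap.ker (ContinuousLinearMap.adjoint W : H →ₗ[ℂ] H),
        ⟪w, v⟫_ℂ ≠ 0 := by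
  by_contra hcon
  push_neg at hcon
  -- V* W = 1, by taking adjoints
  have h' : (ContinuousLinearMap.adjoint V) * W = 1 := by
    have := congrArg ContinuousLinearMap.adjoint h
    rw [show ContinuousLinearMap.adjoint W * V = (ContinuousLinearMap.adjoint W).comp V
      from rfl, ContinuousLinearMap.adjoint_comp, ContinuousLinearMap.adjoint_adjoint] at this
    calc ContinuousLinearMap.adjoint V * W
        = (ContinuousLinearMap.adjoint V).comp W := rfl
      _ = ContinuousLinearMap.adjoint 1 := this
      _ = 1 := by
          rw [show (1 : H →L[ℂ] H) = ContinuousLinearMap.id ℂ H from rfl,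
            ContinuousLinearMap.adjoint_id]
  -- pick a nonzero v in ker V*
  obtain ⟨v, hv, hv0⟩ := Submodule.exists_mem_ne_zero_of_ne_bot hV
  -- (range W)ᗮ ⊆ ker W*
  have hsub : (LinearMap.range (W : H →ₗ[ℂ] H))ᗮ ≤
      LinearMap.ker (ContinuousLinearMap.adjoint W : H →ₗ[ℂ] H) := by
    intro u hu
    have hiz : ∀ x : H, ⟪x, (ContinuousLinearMap.adjoint W) u⟫_ℂ = 0 := by
      intro x
      rw [ContinuousLinearMap.adjoint_inner_right]
      exact (Submodule.mem_orthogonal _ u).1 hu (W x) ⟨x, rfl⟩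
    have := hiz ((ContinuousLinearMap.adjoint W) u)
    rw [inner_self_eq_zero] at this
    exact this
  -- v is orthogonal to ker W*
  have hvorth : v ∈ (LinearMap.ker (ContinuousLinearMap.adjoint W : H →ₗ[ℂ] H))ᗮ := by
    rw [Submodule.mem_orthogonal']
    intro w hw
    rw [← inner_conj_symm, hcon v hv w hw, map_zero]
  -- hence v ∈ closure (range W)
  have hvcl : v ∈ (LinearMap.range (W : H →ₗ[ℂ] H)).topologicalClosure := by
    rw [← Submodule.orthogonal_orthogonal_eq_closure]
    exact Submodule.orthogonal_le hsub hvorth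
  -- W ∘ V* is the identity on closure (range W)
  have hfix : ∀ x ∈ closure (LinearMap.range (W : H →ₗ[ℂ] H) : Set H),
      W ((ContinuousLinearMap.adjoint V) x) = x := by
    intro x hx
    have hcls : IsClosed {y : H | W ((ContinuousLinearMap.adjoint V) y) = y} :=
      isClosed_eq (W.continuous.comp (ContinuousLinearMap.adjoint V).continuous)
        continuous_id
    refine closure_minimal ?_ hcls hx
    rintro y ⟨z, rfl⟩
    show W ((ContinuousLinearMap.adjoint V) (W z)) = W z
    have : (ContinuousLinearMap.adjoint V) (W z) = z := by
      have := congrFun (congrArg DFunLike.coe h') z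
      simpa using this
    rw [this]
  -- but V* v = 0, so v = W (V* v) = 0, contradiction
  have : v = 0 := by
    have h1 := hfix v hvcl
    rw [show (ContinuousLinearMap.adjoint V) v = 0 from LinearMap.mem_ker.1 hv, map_zero] at h1
    exact h1.symm
  exact hv0 this
end

section
/- Let V, W be a biisometric pair on a Hilbert space H (V* W = I = W* V). Suppose v ∈ ker(V*) and w ∈ ker(W*) satisfy ⟨w, v⟩ = 1. Define φ_n = V^n w and ψ_n = W^n v. Then {φ_n} and {ψ_n} are biorthogonal: ⟨φ_m, ψ_n⟩ = δ_{mn} for all m, n ≥ 0. -/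
open scoped InnerProductSpace

/-- For a biisometric pair `V, W` and kernel vectors `v, w` with `⟨w, v⟩ = 1`,
the sequences `φ_n = V^n w` and `ψ_n = W^n v` are biorthogonal. -/
theorem stmt_8 {H : Type*} [NormedAddCommGroup H] [InnerProductSpace ℂ H]
    [CompleteSpace H] (V W : H →L[ℂ] H)
    (h1 : (ContinuousLinearMap.adjoint V) * W = 1)
    (h2 : (ContinuousLinearMap.adjoint W) * V = 1)
    (v w : H) (hv : (ContinuousLinearMap.adjoint V) v = 0)
    (hw : (ContinuousLinearMap.adjoint W) w = 0)
    (hwv : ⟪w, v⟫_ℂ = 1)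
    (φ ψ : ℕ → H) (hφ : ∀ n, φ n = (V ^ n) w) (hψ : ∀ n, ψ n = (W ^ n) v) :
    ∀ m n : ℕ, ⟪ψ n, φ m⟫_ℂ = if m = n then 1 else 0 := by
  have key : ∀ m n : ℕ, ⟪(W ^ n) v, (V ^ m) w⟫_ℂ = if m = n then 1 else 0 := by
    intro m
    induction m with
    | zero =>
      intro n
      cases n with
      | zero =>
        simp only [pow_zero, ContinuousLinearMap.one_apply]
        rw [← inner_conj_symm, hwv, map_one]
        simp
      | succ k =>
        simp only [pow_succ', ContinuousLinearMap.mul_apply, pow_zero,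
          ContinuousLinearMap.one_apply]
        rw [← ContinuousLinearMap.adjoint_inner_right W, hw, inner_zero_right]
        simp
    | succ m ih =>
      intro n
      cases n with
      | zero =>
        simp only [pow_zero, ContinuousLinearMap.one_apply, pow_succ']
        rw [ContinuousLinearMap.mul_apply, ← ContinuousLinearMap.adjoint_inner_left V, hv,
          inner_zero_left]
        simp
      | succ k =>
        rw [pow_succ', pow_succ', ContinuousLinearMap.mul_apply,
          ContinuousLinearMap.mul_apply,
          ← ContinuousLinearMap.adjoint_inner_left V]
        have : (ContinuousLinearMap.adjoint V) (W ((W ^ k) v)) = (W ^ k) v := by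
          have := congrArg (fun T : H →L[ℂ] H => T ((W ^ k) v)) h1
          simpa using this
        rw [this, ih k]
        simp [Nat.succ_eq_add_one]
  intro m n
  rw [hφ, hψ, key]
end
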